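/- Let R be a squarefree positive integer and let S be a divisor of R. Then, as rational numbers, ∑_{k ∣ R, S ∣ k} μ(k)/φ(k) = (μ(S)/φ(S)) · ∏_{q prime, q ∣ R/S} (1 − 1/φ(q)). -/

import Mathlib

open ArithmeticFunction

/-- The arithmetic function `n ↦ 1/φ(n)` over `ℚ`. -/
def totientInvQ : ArithmeticFunction ℚ :=
  ⟨fun n => 1 / (Nat.totient n : ℚ), by simp⟩

lemma totientInvQ_apply (n : ℕ) : totientInvQ n = 1 / (Nat.totient n : ℚ) := rfl

lemma isMultiplicative_totientInvQ : totientInvQ.IsMultiplicative := by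
  refine ⟨by simp [totientInvQ_apply], fun {m n} h => ?_⟩
  simp only [totientInvQ_apply, Nat.totient_mul h, Nat.cast_mul]
  rw [one_div, mul_inv, one_div, one_div]

/-- For `R` squarefree and `S ∣ R`,
`∑_{k ∣ R, S ∣ k} μ(k)/φ(k) = (μ(S)/φ(S)) · ∏_{q prime, q ∣ R/S} (1 − 1/φ(q))`. -/
theorem stmt12 (R S : ℕ) (hR0 : 0 < R) (hRsq : Squarefree R) (hSR : S ∣ R) :
    ∑ k ∈ R.divisors.filter (S ∣ ·), (moebius k : ℚ) / (Nat.totient k : ℚ) =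
      ((moebius S : ℚ) / (Nat.totient S : ℚ)) *
        ∏ q ∈ (R / S).primeFactors, (1 - 1 / (Nat.totient q : ℚ)) := by
  obtain ⟨T, rfl⟩ := hSR
  have hS0 : 0 < S := Nat.pos_of_ne_zero (by rintro rfl; simp at hR0)
  have hT0 : 0 < T := Nat.pos_of_ne_zero (by rintro rfl; simp at hR0)
  have hST : Nat.Coprime S T := (Nat.squarefree_mul_iff.mp hRsq).1
  have hSsq : Squarefree S := (Nat.squarefree_mul_iff.mp hRsq).2.1
  have hTsq : Squarefree T := (Nat.squarefree_mul_iff.mp hRsq).2.2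
  have hdiv : S * T / S = T := Nat.mul_div_cancel_left T hS0
  rw [hdiv]
  -- reindex the sum by divisors of T
  have hsum : ∑ k ∈ (S * T).divisors.filter (S ∣ ·), (moebius k : ℚ) / (Nat.totient k : ℚ)
      = ∑ d ∈ T.divisors, (moebius (S * d) : ℚ) / (Nat.totient (S * d) : ℚ) := by
    refine Finset.sum_nbij' (fun k => k / S) (fun d => S * d) ?_ ?_ ?_ ?_ ?_
    · intro k hk
      simp only [Finset.mem_filter, Nat.mem_divisors] at hk
      obtain ⟨⟨hkd, hne⟩, c, rfl⟩ := hk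
      rw [Nat.mul_div_cancel_left c hS0]
      exact Nat.mem_divisors.mpr ⟨(Nat.mul_dvd_mul_iff_left hS0).mp hkd, hT0.ne'⟩
    · intro d hd
      simp only [Nat.mem_divisors] at hd
      exact Finset.mem_filter.mpr ⟨Nat.mem_divisors.mpr
        ⟨Nat.mul_dvd_mul_left S hd.1, (Nat.mul_pos hS0 hT0).ne'⟩, Dvd.intro d rfl⟩
    · intro k hk
      simp only [Finset.mem_filter] at hk
      exact Nat.mul_div_cancel' hk.2
    · intro d hd
      exact Nat.mul_div_cancel_left d hS0
    · intro k hk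
      simp only [Finset.mem_filter] at hk
      rw [Nat.mul_div_cancel' hk.2]
  rw [hsum]
  -- split each term using multiplicativity
  have hsplit : ∀ d ∈ T.divisors, (moebius (S * d) : ℚ) / (Nat.totient (S * d) : ℚ)
      = ((moebius S : ℚ) / (Nat.totient S : ℚ)) * ((moebius d : ℚ) / (Nat.totient d : ℚ)) := by
    intro d hd
    have hdT : d ∣ T := (Nat.mem_divisors.mp hd).1
    have hcop : Nat.Coprime S d := Nat.Coprime.coprime_dvd_right hdT hST
    rw [isMultiplicative_moebius.map_mul_of_coprime hcop,
      Nat.totient_mul hcop]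
    push_cast
    ring
  rw [Finset.sum_congr rfl hsplit, ← Finset.mul_sum]
  congr 1
  -- the remaining sum over divisors of T
  have key := IsMultiplicative.prodPrimeFactors_one_sub_of_squarefree totientInvQ
    isMultiplicative_totientInvQ hTsq
  simp only [totientInvQ_apply] at key
  rw [key]
  refine Finset.sum_congr rfl fun d hd => ?_
  rw [mul_one_div]
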